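/- Let X_1, …, X_m be i.i.d. real random variables, let x ∈ ℝ, and set p = P(X_1 ≥ x). If p ≤ 1/2, then P( med(X_1, …, X_m) ≥ x ) ≤ exp( (m/2) · ln( 4p(1 − p) ) ). -/

import Mathlib

open MeasureTheory ProbabilityTheory Real
open scoped ENNReal

/-- The sample median of `m` real values: the middle order statistic if `m` is odd,
the average of the two middle order statistics if `m` is even. -/
noncomputable def sampleMedian {m : ℕ} (x : Fin m → ℝ) : ℝ :=
  let l := List.insertionSort (· ≤ ·) (List.ofFn x)
  if m % 2 = 1 then l.getD (m / 2) 0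
  else (l.getD (m / 2 - 1) 0 + l.getD (m / 2) 0) / 2

lemma countP_ofFn_eq {m : ℕ} (v : Fin m → ℝ) (p : ℝ → Prop) [DecidablePred p] :
    (List.ofFn v).countP (fun a => decide (p a)) = (Finset.univ.filter (fun i => p (v i))).card := by
  rw [List.countP_eq_length_filter, List.ofFn_eq_map, List.filter_map, List.length_map]
  rw [Finset.card, Finset.filter_val, Fin.univ_def]
  simp [Multiset.filter_coe]
  rfl

lemma median_count {m : ℕ} (hm : 1 ≤ m) (v : Fin m → ℝ) (x : ℝ)
    (h : x ≤ sampleMedian v) :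
    (m - m / 2 : ℕ) ≤ (Finset.univ.filter (fun i => x ≤ v i)).card := by
  classical
  set l := List.insertionSort (· ≤ ·) (List.ofFn v) with hl
  have hlen : l.length = m := by
    rw [hl, List.length_insertionSort, List.length_ofFn]
  have hsort : l.Pairwise (· ≤ ·) := List.pairwise_insertionSort _ _
  have hhalf : m / 2 < m := Nat.div_lt_self hm one_lt_two
  have hhalf' : m / 2 < l.length := hlen ▸ hhalf
  have mono : ∀ (i j : ℕ) (hij : i ≤ j) (hj : j < l.length),
      l[i]'(lt_of_le_of_lt hij hj) ≤ l[j]'hj := by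
    intro i j hij hj
    simpa using hsort.rel_get_of_le (a := ⟨i, lt_of_le_of_lt hij hj⟩) (b := ⟨j, hj⟩) hij
  have key : x ≤ l[m / 2]'hhalf' := by
    unfold sampleMedian at h
    rw [← hl] at h
    by_cases hpar : m % 2 = 1
    · rw [if_pos hpar, List.getD_eq_getElem l 0 hhalf'] at h
      exact h
    · rw [if_neg hpar] at h
      have h2 : m / 2 - 1 < l.length := lt_of_le_of_lt (Nat.sub_le _ _) hhalf'
      rw [List.getD_eq_getElem l 0 hhalf', List.getD_eq_getElem l 0 h2] at h
      have hle : l[m / 2 - 1] ≤ l[m / 2] := mono _ _ (Nat.sub_le _ _) hhalf'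
      linarith
  have hdrop : ∀ a ∈ l.drop (m / 2), x ≤ a := by
    intro a ha
    obtain ⟨i, hi, rfl⟩ := List.mem_iff_getElem.mp ha
    rw [List.length_drop] at hi
    rw [List.getElem_drop]
    exact le_trans key (mono _ _ (Nat.le_add_right _ _) (by omega))
  have hcount : (m - m / 2 : ℕ) ≤ l.countP (fun a => decide (x ≤ a)) := by
    have : l.countP (fun a => decide (x ≤ a))
        = (l.take (m / 2)).countP (fun a => decide (x ≤ a))
          + (l.drop (m / 2)).countP (fun a => decide (x ≤ a)) := by
      rw [← List.countP_append, List.take_append_drop]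
    rw [this]
    have hall : (l.drop (m / 2)).countP (fun a => decide (x ≤ a)) = (l.drop (m / 2)).length := by
      rw [List.countP_eq_length]
      intro a ha; exact decide_eq_true (hdrop a ha)
    rw [hall, List.length_drop, hlen]
    omega
  have hperm : l.countP (fun a => decide (x ≤ a))
      = (List.ofFn v).countP (fun a => decide (x ≤ a)) :=
    (List.perm_insertionSort _ _).countP_eq _
  rw [hperm, countP_ofFn_eq] at hcount
  exact hcount

lemma mgf_indicator {Ω : Type*} [MeasureSpace Ω] [IsProbabilityMeasure (ℙ : Measure Ω)]
    (A : Set Ω) (hA : MeasurableSet A) (t : ℝ) :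
    mgf (A.indicator (fun _ => (1:ℝ))) ℙ t = (Real.exp t - 1) * (ℙ A).toReal + 1 := by
  have hfe : (fun ω => Real.exp (t * A.indicator (fun _ => (1:ℝ)) ω))
      = fun ω => A.indicator (fun _ => Real.exp t - 1) ω + 1 := by
    funext ω
    by_cases h : ω ∈ A <;> simp [Set.indicator_of_mem, Set.indicator_of_notMem, h]
  rw [mgf, hfe]
  rw [integral_add ((integrable_const (Real.exp t - 1)).indicator hA) (integrable_const 1)]
  rw [integral_indicator_const _ hA]
  simp [smul_eq_mul]
  simp only [measureReal_def]
  ring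

/-- Let `X 0, …, X (m-1)` be i.i.d. real random variables (`m ≥ 1`), `x ∈ ℝ`,
and `p = P(X 0 ≥ x)`.  If `p ≤ 1/2`, then
`P(med(X 0, …, X (m-1)) ≥ x) ≤ exp((m/2)·ln(4p(1−p)))`. -/
theorem stmt8
    {Ω : Type*} [MeasureSpace Ω] [IsProbabilityMeasure (ℙ : Measure Ω)]
    {m : ℕ} (hm : 1 ≤ m)
    (X : Fin m → Ω → ℝ) (hXmeas : ∀ i, Measurable (X i))
    (hindep : iIndepFun X ℙ)
    (hident : ∀ i : Fin m, Measure.map (X i) ℙ = Measure.map (X ⟨0, hm⟩) ℙ)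
    (x : ℝ) (p : ℝ)
    (hp : ℙ {ω | x ≤ X ⟨0, hm⟩ ω} = ENNReal.ofReal p)
    (hphalf : p ≤ 1 / 2) :
    ℙ {ω | x ≤ sampleMedian (fun i => X i ω)}
      ≤ ENNReal.ofReal (Real.exp ((m : ℝ) / 2 * Real.log (4 * p * (1 - p)))) := by
  classical
  set A : Fin m → Set Ω := fun i => {ω | x ≤ X i ω} with hA
  have hAmeas : ∀ i, MeasurableSet (A i) := fun i => (hXmeas i) measurableSet_Ici
  have hPA : ∀ i, ℙ (A i) = ENNReal.ofReal p := by
    intro i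
    have h1 : A i = X i ⁻¹' Set.Ici x := rfl
    rw [h1, ← Measure.map_apply (hXmeas i) measurableSet_Ici, hident i,
      Measure.map_apply (hXmeas ⟨0, hm⟩) measurableSet_Ici]
    exact hp
  by_cases hp0 : p ≤ 0
  · -- degenerate case: the success probability is zero
    have hsub : {ω | x ≤ sampleMedian (fun i => X i ω)} ⊆ ⋃ i, A i := by
      intro ω hω
      have hc := median_count hm (fun i => X i ω) x hω
      beta_reduce at hc
      have hpos : 0 < (Finset.univ.filter (fun i => x ≤ X i ω)).card := by omega
      obtain ⟨i, hi⟩ := Finset.card_pos.mp hpos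
      simp only [Finset.mem_filter] at hi
      exact Set.mem_iUnion.mpr ⟨i, hi.2⟩
    refine le_trans (le_trans (measure_mono hsub) ((measure_iUnion_le _).trans ?_)) zero_le
    simp [hPA, ENNReal.ofReal_eq_zero.mpr hp0]
  · push_neg at hp0
    have hq : (0:ℝ) < 1 - p := by linarith
    set t := Real.log ((1 - p) / p) with ht
    have htnn : 0 ≤ t := Real.log_nonneg (by rw [le_div_iff₀ hp0]; linarith)
    have hexpt : Real.exp t = (1 - p) / p := Real.exp_log (div_pos hq hp0)
    set Y : Fin m → Ω → ℝ := fun i => (A i).indicator (fun _ => (1:ℝ)) with hY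
    have hYmeas : ∀ i, Measurable (Y i) := fun i => measurable_const.indicator (hAmeas i)
    have hYval : ∀ i ω, Y i ω = if x ≤ X i ω then 1 else 0 := by
      intro i ω
      by_cases h : x ≤ X i ω
      · rw [hY]; simp only [Set.indicator_of_mem (show ω ∈ A i from h), if_pos h]
      · rw [hY]; simp only [Set.indicator_of_notMem (show ω ∉ A i from h), if_neg h]
    have hYindep : iIndepFun Y ℙ := by
      have hcomp := hindep.comp (fun _ => (Set.Ici x).indicator (fun _ => (1:ℝ)))
        (fun _ => measurable_const.indicator measurableSet_Ici)
      have : Y = fun i => ((Set.Ici x).indicator (fun _ => (1:ℝ))) ∘ X i := by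
        funext i ω
        rw [hYval]
        by_cases h : x ≤ X i ω
        · simp [Set.indicator_of_mem, h]
        · simp [Set.indicator_of_notMem, h]
      rw [this]
      exact hcomp
    have hmgf : ∀ i, mgf (Y i) ℙ t = 2 * (1 - p) := by
      intro i
      rw [hY, mgf_indicator (A i) (hAmeas i) t, hPA i, ENNReal.toReal_ofReal hp0.le, hexpt]
      field_simp
      ring
    have hmgfS : mgf (∑ i, Y i) ℙ t = (2 * (1 - p)) ^ m := by
      rw [hYindep.mgf_sum hYmeas Finset.univ]
      simp [hmgf]
    have hSapp : ∀ ω, (∑ i, Y i) ω = ∑ i, Y i ω := by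
      intro ω; exact Finset.sum_apply ω Finset.univ Y
    have hSmeas : Measurable (∑ i, Y i) := by
      rw [show (∑ i, Y i) = fun ω => ∑ i, Y i ω from funext hSapp]
      exact Finset.measurable_sum _ fun i _ => hYmeas i
    have hYnn : ∀ i ω, 0 ≤ Y i ω := by
      intro i ω; rw [hYval]; positivity
    have hYle : ∀ i ω, Y i ω ≤ 1 := by
      intro i ω; rw [hYval]; split <;> norm_num
    have hint : Integrable (fun ω => Real.exp (t * (∑ i, Y i) ω)) ℙ := by
      refine Integrable.mono' (integrable_const (Real.exp (t * m)))
        ((hSmeas.const_mul t).exp.aestronglyMeasurable)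
        (Filter.Eventually.of_forall fun ω => ?_)
      rw [Real.norm_eq_abs, Real.abs_exp]
      apply Real.exp_le_exp.mpr
      apply mul_le_mul_of_nonneg_left _ htnn
      rw [hSapp]
      calc ∑ i, Y i ω ≤ ∑ _i : Fin m, (1:ℝ) := Finset.sum_le_sum fun i _ => hYle i ω
        _ = m := by simp
    set B := {ω | (m : ℝ) / 2 ≤ (∑ i, Y i) ω} with hB
    have hch := measure_ge_le_exp_mul_mgf (μ := ℙ) (X := ∑ i, Y i) ((m : ℝ)/2) htnn hint
    have hsub : {ω | x ≤ sampleMedian (fun i => X i ω)} ⊆ B := by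
      intro ω hω
      have hc := median_count hm (fun i => X i ω) x hω
      beta_reduce at hc
      have hsum : (∑ i, Y i) ω = ((Finset.univ.filter (fun i => x ≤ X i ω)).card : ℝ) := by
        rw [hSapp, ← Finset.sum_boole]
        exact Finset.sum_congr rfl fun i _ => hYval i ω
      have hcc : (m : ℝ) ≤ 2 * ((Finset.univ.filter (fun i => x ≤ X i ω)).card : ℝ) := by
        have : m ≤ 2 * (Finset.univ.filter (fun i => x ≤ X i ω)).card := by omega
        exact_mod_cast this
      rw [hB, Set.mem_setOf_eq, hsum]
      linarith
    have h2q : (0:ℝ) < 2 * (1 - p) := by linarith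
    have hlog4 : Real.log 4 = 2 * Real.log 2 := by
      rw [show (4:ℝ) = 2 ^ 2 by norm_num, Real.log_pow]; push_cast; ring
    have hexpeq : Real.exp (-t * ((m:ℝ)/2)) * (2 * (1 - p)) ^ m
        = Real.exp ((m : ℝ) / 2 * Real.log (4 * p * (1 - p))) := by
      rw [show (2 * (1 - p)) ^ m = Real.exp ((m : ℝ) * Real.log (2 * (1 - p))) by
        rw [Real.exp_nat_mul, Real.exp_log h2q], ← Real.exp_add]
      congr 1
      rw [ht, Real.log_div hq.ne' hp0.ne',
        Real.log_mul (by norm_num : (2:ℝ) ≠ 0) hq.ne',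
        Real.log_mul (mul_ne_zero (by norm_num : (4:ℝ) ≠ 0) hp0.ne') hq.ne',
        Real.log_mul (by norm_num : (4:ℝ) ≠ 0) hp0.ne', hlog4]
      ring
    refine le_trans (measure_mono hsub) ?_
    rw [← ENNReal.ofReal_toReal (measure_ne_top ℙ B)]
    apply ENNReal.ofReal_le_ofReal
    calc (ℙ B).toReal ≤ Real.exp (-t * ((m:ℝ)/2)) * mgf (∑ i, Y i) ℙ t := hch
      _ = Real.exp ((m : ℝ) / 2 * Real.log (4 * p * (1 - p))) := by rw [hmgfS, hexpeq]
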